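/- Let d ≥ 5 and k ≥ 1 be natural numbers and set n = 2dk. Then there exists a finite set V with |V| = n and a hereditary family 𝓕 of subsets of V with |𝓕| = k·(2^{d+1} − 2d − 1) + 1 such that for every x ∈ V one has |𝓕_x| < |𝓕| − (2^{d−1} − d). In particular, m(n, 2^{d−1} − d) ≤ n(2^d − d − 1/2)/d. -/

import Mathlib

/-- A family of finite sets is hereditary if it is closed under taking subsets. -/
def Hereditary {α : Type*} [DecidableEq α] (𝓕 : Finset (Finset α)) : Prop :=
  ∀ F ∈ 𝓕, ∀ F' ⊆ F, F' ∈ 𝓕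

/-- The trace of a family `𝓕` at a vertex `x`: the family `{F \ {x} : F ∈ 𝓕}`. -/
def traceAt {α : Type*} [DecidableEq α] (𝓕 : Finset (Finset α)) (x : α) :
    Finset (Finset α) :=
  𝓕.image fun F => F.erase x

open Finset

lemma count_small (s : Finset ℕ) (m : ℕ) (hm : 2 ≤ m) (hs : s.card = m) :
    (s.powerset.filter fun F => F.card ≤ m - 2).card = 2 ^ m - (m + 1) := by
  have key : s.powerset.filter (fun F => ¬ F.card ≤ m - 2)
      = Finset.powersetCard (m-1) s ∪ Finset.powersetCard m s := by
    ext F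
    simp only [mem_filter, mem_powerset, mem_union, Finset.mem_powersetCard]
    constructor
    · rintro ⟨hF, hc⟩
      have hle : F.card ≤ m := hs ▸ card_le_card hF
      rcases (by omega : F.card = m - 1 ∨ F.card = m) with h | h
      · exact Or.inl ⟨hF, h⟩
      · exact Or.inr ⟨hF, h⟩
    · rintro (⟨h1, h2⟩ | ⟨h1, h2⟩) <;> exact ⟨h1, by omega⟩
  have hdisj : Disjoint (Finset.powersetCard (m-1) s) (Finset.powersetCard m s) := by
    rw [Finset.disjoint_left]
    intro F h1 h2
    rw [Finset.mem_powersetCard] at h1 h2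
    omega
  have hcard : (s.powerset.filter (fun F => ¬ F.card ≤ m - 2)).card = m + 1 := by
    rw [key, card_union_of_disjoint hdisj, Finset.card_powersetCard,
      Finset.card_powersetCard, hs]
    rw [Nat.choose_self, Nat.choose_symm (by omega : 1 ≤ m), Nat.choose_one_right]
  have := Finset.card_filter_add_card_filter_not
    (s := s.powerset) (p := fun F => F.card ≤ m - 2)
  rw [Finset.card_powerset, hs] at this
  have h2m : m + 1 ≤ 2 ^ m := by
    have := Nat.lt_two_pow_self (n := m); omega
  omega

lemma trace_eq (𝓕 : Finset (Finset ℕ)) (x : ℕ) (h : ∀ F ∈ 𝓕, ∀ F' ⊆ F, F' ∈ 𝓕) :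
    (𝓕.image fun F => F.erase x) = 𝓕.filter fun F => x ∉ F := by
  ext F
  simp only [mem_image, mem_filter]
  constructor
  · rintro ⟨G, hG, rfl⟩
    exact ⟨h G hG _ (erase_subset _ _), notMem_erase _ _⟩
  · rintro ⟨hF, hx⟩
    exact ⟨F, hF, erase_eq_of_notMem hx⟩


lemma two_pow_big {d : ℕ} (h : 2 ≤ d) : d + 2 ≤ 2 ^ d := by
  induction d with
  | zero => omega
  | succ n ih =>
    rcases Nat.lt_or_ge n 2 with h2 | h2
    · interval_cases n
      · omega
      · norm_num
    · have := ih h2; rw [pow_succ]; omega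

/-- block `i` of size `d`. -/
def blk (d i : ℕ) : Finset ℕ := Finset.Ico (d*i) (d*i+d)

/-- per-block family: nonempty subsets of the block of size ≤ d-2, plus block minus head. -/
def Gfam (d i : ℕ) : Finset (Finset ℕ) :=
  insert ((blk d i).erase (d*i))
    ((blk d i).powerset.filter fun F => F.Nonempty ∧ F.card ≤ d-2)

/-- per-superblock family. -/
def Hfam (d j : ℕ) : Finset (Finset ℕ) :=
  (Gfam d (2*j) ∪ Gfam d (2*j+1)) ∪ {{d*(2*j), d*(2*j+1)}}

def Fam (d k : ℕ) : Finset (Finset ℕ) :=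
  insert ∅ ((Finset.range k).biUnion (Hfam d))

lemma blk_card (d i : ℕ) : (blk d i).card = d := by
  simp [blk]

lemma head_mem_blk (d i : ℕ) (hd : 1 ≤ d) : d*i ∈ blk d i := by
  simp [blk]; omega

lemma mem_Gfam {d i : ℕ} {F : Finset ℕ} :
    F ∈ Gfam d i ↔ F = (blk d i).erase (d*i) ∨ (F ⊆ blk d i ∧ F.Nonempty ∧ F.card ≤ d-2) := by
  simp [Gfam, mem_filter, mem_powerset, and_assoc]

lemma Gfam_nonempty_subset {d i : ℕ} {F : Finset ℕ} (hd : 2 ≤ d) (h : F ∈ Gfam d i) :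
    F.Nonempty ∧ F ⊆ blk d i := by
  rcases mem_Gfam.1 h with rfl | ⟨h1, h2, h3⟩
  · constructor
    · rw [← Finset.card_pos, card_erase_of_mem (head_mem_blk d i (by omega)), blk_card]
      omega
    · exact erase_subset _ _
  · exact ⟨h2, h1⟩

lemma Hfam_nonempty_bound {d j : ℕ} {F : Finset ℕ} (hd : 2 ≤ d) (h : F ∈ Hfam d j) :
    F.Nonempty ∧ ∀ a ∈ F, d*(2*j) ≤ a ∧ a < d*(2*j) + 2*d := by
  have hblk : ∀ i a, a ∈ blk d i → d*i ≤ a ∧ a < d*i + d := by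
    intro i a ha; simpa [blk] using ha
  simp only [Hfam, mem_union, mem_singleton] at h
  rcases h with (h | h) | rfl
  · obtain ⟨h1, h2⟩ := Gfam_nonempty_subset hd h
    exact ⟨h1, fun a ha => by have := hblk _ a (h2 ha); omega⟩
  · obtain ⟨h1, h2⟩ := Gfam_nonempty_subset hd h
    refine ⟨h1, fun a ha => ?_⟩
    have := hblk _ a (h2 ha)
    have : d*(2*j+1) = d*(2*j) + d := by ring
    omega
  · refine ⟨⟨d*(2*j), by simp⟩, fun a ha => ?_⟩
    simp only [mem_insert, mem_singleton] at ha
    have : d*(2*j+1) = d*(2*j) + d := by ring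
    rcases ha with rfl | rfl <;> omega

lemma Hfam_disjoint {d : ℕ} (hd : 2 ≤ d) {j j' : ℕ} (hjj : j ≠ j') :
    Disjoint (Hfam d j) (Hfam d j') := by
  rw [Finset.disjoint_left]
  intro F h1 h2
  obtain ⟨⟨a, ha⟩, hb1⟩ := Hfam_nonempty_bound hd h1
  have hb2 := (Hfam_nonempty_bound hd h2).2
  have e1 := hb1 a ha
  have e2 := hb2 a ha
  rcases lt_trichotomy j j' with h | h | h
  · have : d*(2*j) + 2*d ≤ d*(2*j') := by nlinarith
    omega
  · exact hjj h
  · have : d*(2*j') + 2*d ≤ d*(2*j) := by nlinarith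
    omega

lemma Gfam_card {d : ℕ} (hd : 5 ≤ d) (i : ℕ) : (Gfam d i).card = 2^d - d - 1 := by
  have hne : (blk d i).erase (d*i) ∉
      ((blk d i).powerset.filter fun F => F.Nonempty ∧ F.card ≤ d-2) := by
    simp only [mem_filter, mem_powerset, not_and]
    intro _ _
    rw [card_erase_of_mem (head_mem_blk d i (by omega)), blk_card]
    omega
  rw [Gfam, card_insert_of_notMem hne]
  have : ((blk d i).powerset.filter fun F => F.Nonempty ∧ F.card ≤ d-2)
      = (((blk d i).powerset.filter fun F => F.card ≤ d-2)).erase ∅ := by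
    ext F
    simp only [mem_filter, mem_powerset, mem_erase, nonempty_iff_ne_empty]
    tauto
  rw [this, card_erase_of_mem (by simp [mem_filter]),
    count_small _ d (by omega) (blk_card d i)]
  have h2m : d + 2 ≤ 2 ^ d := two_pow_big (by omega)
  omega

lemma Hfam_card {d : ℕ} (hd : 5 ≤ d) (j : ℕ) : (Hfam d j).card = 2^(d+1) - 2*d - 1 := by
  have hG : Disjoint (Gfam d (2*j)) (Gfam d (2*j+1)) := by
    rw [Finset.disjoint_left]
    intro F h1 h2
    obtain ⟨⟨a, ha⟩, hs1⟩ := Gfam_nonempty_subset (by omega : 2 ≤ d) h1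
    have hs2 := (Gfam_nonempty_subset (by omega : 2 ≤ d) h2).2
    have e1 : d*(2*j) ≤ a ∧ a < d*(2*j)+d := by simpa [blk] using hs1 ha
    have e2 : d*(2*j+1) ≤ a ∧ a < d*(2*j+1)+d := by simpa [blk] using hs2 ha
    have : d*(2*j+1) = d*(2*j) + d := by ring
    omega
  have hpair : ({d*(2*j), d*(2*j+1)} : Finset ℕ) ∉ Gfam d (2*j) ∪ Gfam d (2*j+1) := by
    rw [mem_union]
    rintro (h | h)
    · have hsub := (Gfam_nonempty_subset (by omega : 2 ≤ d) h).2
      have : d*(2*j+1) ∈ blk d (2*j) := hsub (by simp)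
      simp only [blk, Finset.mem_Ico] at this
      have : d*(2*j+1) = d*(2*j) + d := by ring
      omega
    · have hsub := (Gfam_nonempty_subset (by omega : 2 ≤ d) h).2
      have : d*(2*j) ∈ blk d (2*j+1) := hsub (by simp)
      simp only [blk, Finset.mem_Ico] at this
      have : d*(2*j+1) = d*(2*j) + d := by ring
      omega
  have : (Hfam d j).card = (Gfam d (2*j)).card + (Gfam d (2*j+1)).card + 1 := by
    have : Hfam d j = insert {d*(2*j), d*(2*j+1)} (Gfam d (2*j) ∪ Gfam d (2*j+1)) := by
      rw [Hfam, union_comm]; rfl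
    rw [this, card_insert_of_notMem hpair, card_union_of_disjoint hG]
  rw [this, Gfam_card hd, Gfam_card hd]
  have h2m : d + 2 ≤ 2 ^ d := two_pow_big (by omega)
  have : 2^(d+1) = 2^d + 2^d := by rw [pow_succ]; ring
  omega

lemma empty_not_mem_biUnion {d k : ℕ} (hd : 5 ≤ d) :
    ∅ ∉ (Finset.range k).biUnion (Hfam d) := by
  rw [mem_biUnion]
  rintro ⟨j, _, hj⟩
  exact not_nonempty_empty (Hfam_nonempty_bound (by omega) hj).1

lemma Fam_card {d k : ℕ} (hd : 5 ≤ d) :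
    (Fam d k).card = k * (2^(d+1) - 2*d - 1) + 1 := by
  rw [Fam, card_insert_of_notMem (empty_not_mem_biUnion hd),
    card_biUnion (fun i _ j _ hij => Hfam_disjoint (by omega) hij)]
  rw [Finset.sum_congr rfl (fun j _ => Hfam_card hd j), Finset.sum_const, card_range,
    smul_eq_mul]

lemma Gfam_hered {d i : ℕ} (hd : 5 ≤ d) {F F' : Finset ℕ}
    (hF : F ∈ Gfam d i) (hsub : F' ⊆ F) (hne : F'.Nonempty) : F' ∈ Gfam d i := by
  rcases mem_Gfam.1 hF with hFe | ⟨h1, h2, h3⟩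
  · have hcF : F.card = d - 1 := by
      rw [hFe, card_erase_of_mem (head_mem_blk d i (by omega)), blk_card]
    have hFb : F' ⊆ blk d i := hsub.trans (hFe ▸ erase_subset _ _)
    rcases Nat.lt_or_ge F'.card (d-1) with hc | hc
    · exact mem_Gfam.2 (Or.inr ⟨hFb, hne, by omega⟩)
    · have : F' = F := eq_of_subset_of_card_le hsub (by omega)
      rw [this]; exact hF
  · exact mem_Gfam.2 (Or.inr ⟨hsub.trans h1, hne, le_trans (card_le_card hsub) h3⟩)

lemma head_singleton_mem_Gfam {d : ℕ} (hd : 5 ≤ d) (i : ℕ) : ({d*i} : Finset ℕ) ∈ Gfam d i :=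
  mem_Gfam.2 (Or.inr ⟨by simp [singleton_subset_iff, head_mem_blk d i (by omega)],
    singleton_nonempty _, by simp; omega⟩)

lemma Fam_hereditary {d k : ℕ} (hd : 5 ≤ d) :
    ∀ F ∈ Fam d k, ∀ F' ⊆ F, F' ∈ Fam d k := by
  intro F hF F' hsub
  rcases F'.eq_empty_or_nonempty with rfl | hne
  · exact mem_insert_self _ _
  simp only [Fam, mem_insert, mem_biUnion] at hF ⊢
  rcases hF with rfl | ⟨j, hj, hFj⟩
  · exact absurd (subset_empty.1 hsub) (nonempty_iff_ne_empty.1 hne)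
  refine Or.inr ⟨j, hj, ?_⟩
  simp only [Hfam, mem_union, mem_singleton] at hFj ⊢
  rcases hFj with (h | h) | rfl
  · exact Or.inl (Or.inl (Gfam_hered hd h hsub hne))
  · exact Or.inl (Or.inr (Gfam_hered hd h hsub hne))
  · -- F = pair
    by_cases ha : d*(2*j) ∈ F' <;> by_cases hb : d*(2*j+1) ∈ F'
    · right
      apply Finset.Subset.antisymm hsub
      intro x hx
      simp only [mem_insert, mem_singleton] at hx
      rcases hx with rfl | rfl <;> assumption
    · left; left
      have : F' ⊆ {d*(2*j)} := by
        intro x hx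
        have := hsub hx
        simp only [mem_insert, mem_singleton] at this ⊢
        rcases this with rfl | rfl
        · rfl
        · exact absurd hx hb
      have : F' = {d*(2*j)} := by
        rcases Finset.subset_singleton_iff.1 this with rfl | h
        · exact absurd rfl (nonempty_iff_ne_empty.1 hne)
        · exact h
      rw [this]; exact head_singleton_mem_Gfam hd _
    · left; right
      have : F' ⊆ {d*(2*j+1)} := by
        intro x hx
        have := hsub hx
        simp only [mem_insert, mem_singleton] at this ⊢
        rcases this with rfl | rfl
        · exact absurd hx ha
        · rfl
      have : F' = {d*(2*j+1)} := by
        rcases Finset.subset_singleton_iff.1 this with rfl | h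
        · exact absurd rfl (nonempty_iff_ne_empty.1 hne)
        · exact h
      rw [this]; exact head_singleton_mem_Gfam hd _
    · exfalso
      obtain ⟨x, hx⟩ := hne
      have := hsub hx
      simp only [mem_insert, mem_singleton] at this
      rcases this with rfl | rfl
      · exact ha hx
      · exact hb hx

lemma Fam_subset_powerset {d k : ℕ} (hd : 5 ≤ d) :
    Fam d k ⊆ (Finset.range (2*d*k)).powerset := by
  intro F hF
  rw [mem_powerset]
  simp only [Fam, mem_insert, mem_biUnion] at hF
  rcases hF with rfl | ⟨j, hj, hFj⟩
  · exact empty_subset _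
  have hb := (Hfam_nonempty_bound (by omega : 2 ≤ d) hFj).2
  intro a ha
  rw [Finset.mem_range]
  have := hb a ha
  rw [Finset.mem_range] at hj
  have : d*(2*j) + 2*d ≤ 2*d*k := by nlinarith
  omega

lemma Gfam_subset_Fam {d k i : ℕ} (hi : i < 2*k) : Gfam d i ⊆ Fam d k := by
  intro F hF
  have hik : i/2 < k := by omega
  apply mem_insert_of_mem
  rw [mem_biUnion]
  refine ⟨i/2, Finset.mem_range.2 hik, ?_⟩
  have h2 : i = 2*(i/2) ∨ i = 2*(i/2)+1 := by omega
  rcases h2 with h | h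
  · exact mem_union_left _ (mem_union_left _ (h ▸ hF))
  · exact mem_union_left _ (mem_union_right _ (h ▸ hF))

lemma deg_lower {d k : ℕ} (hd : 5 ≤ d) {x : ℕ} (hx : x < 2*d*k) :
    2^(d-1) - d + 1 ≤ ((Fam d k).filter (fun F => x ∈ F)).card := by
  set i := x / d with hi
  have hmod := Nat.div_add_mod x d
  rw [← hi] at hmod
  have hmlt : x % d < d := Nat.mod_lt x (by omega)
  have hi1 : d * i ≤ x := by omega
  have hi2 : x < d * i + d := by omega
  have hik : i < 2 * k := by
    by_contra h
    push_neg at h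
    have h1 : d * (2 * k) ≤ d * i := Nat.mul_le_mul_left d h
    have h2 : d * (2 * k) = 2 * d * k := by ring
    omega
  have hxblk : x ∈ blk d i := by simp only [blk, Finset.mem_Ico]; omega
  set S : Finset (Finset ℕ) :=
    ((((blk d i).erase x).powerset.filter fun F => F.card ≤ d - 1 - 2).image (insert x))
    with hS
  have hScard : S.card = 2 ^ (d-1) - d := by
    rw [hS, Finset.card_image_of_injOn, count_small _ (d-1) (by omega)
      (by rw [card_erase_of_mem hxblk, blk_card])]
    · omega
    · intro F1 h1 F2 h2 he
      simp only [mem_coe, mem_filter, mem_powerset] at h1 h2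
      have hx1 : x ∉ F1 := fun h => (Finset.notMem_erase x _) (h1.1 h)
      have hx2 : x ∉ F2 := fun h => (Finset.notMem_erase x _) (h2.1 h)
      rw [← Finset.erase_insert hx1, ← Finset.erase_insert hx2, he]
  have hSsub : S ⊆ (Fam d k).filter (fun F => x ∈ F) := by
    intro F hF
    rw [hS, Finset.mem_image] at hF
    obtain ⟨F'', hF'', rfl⟩ := hF
    rw [mem_filter, mem_powerset] at hF''
    rw [mem_filter]
    refine ⟨Gfam_subset_Fam hik (mem_Gfam.2 (Or.inr ⟨?_, insert_nonempty _ _, ?_⟩)),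
      mem_insert_self _ _⟩
    · exact insert_subset hxblk (hF''.1.trans (erase_subset _ _))
    · have hxm : x ∉ F'' := fun h => (Finset.notMem_erase x _) (hF''.1 h)
      rw [card_insert_of_notMem hxm]
      omega
  -- the extra set
  obtain ⟨E, hE1, hE2, hE3⟩ : ∃ E : Finset ℕ,
      E ∈ (Fam d k).filter (fun F => x ∈ F) ∧ E ∉ S ∧ True := by
    by_cases hxi : x = d * i
    · refine ⟨{d*(2*(i/2)), d*(2*(i/2)+1)}, ?_, ?_, trivial⟩
      · rw [mem_filter]
        constructor
        · apply mem_insert_of_mem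
          rw [mem_biUnion]
          exact ⟨i/2, Finset.mem_range.2 (by omega), mem_union_right _ (mem_singleton_self _)⟩
        · have h2 : i = 2*(i/2) ∨ i = 2*(i/2)+1 := by omega
          rcases h2 with h | h
          · exact mem_insert.2 (Or.inl (hxi.trans (congrArg (fun t => d*t) h)))
          · exact mem_insert.2 (Or.inr (mem_singleton.2
              (hxi.trans (congrArg (fun t => d*t) h))))
      · intro hmem
        rw [hS, Finset.mem_image] at hmem
        obtain ⟨F'', hF'', heq⟩ := hmem
        rw [mem_filter, mem_powerset] at hF''
        have hsubblk : ({d*(2*(i/2)), d*(2*(i/2)+1)} : Finset ℕ) ⊆ blk d i := by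
          rw [← heq]
          exact insert_subset hxblk (hF''.1.trans (erase_subset _ _))
        have h2 : i = 2*(i/2) ∨ i = 2*(i/2)+1 := by omega
        rcases h2 with h | h
        · have : d*(2*(i/2)+1) ∈ blk d i := hsubblk (mem_insert_of_mem (mem_singleton_self _))
          simp only [blk, Finset.mem_Ico] at this
          have he : d*(2*(i/2)+1) = d*(2*(i/2)) + d := by ring
          have he2 : d*(2*(i/2)) = d * i := by rw [← h]
          omega
        · have : d*(2*(i/2)) ∈ blk d i := hsubblk (mem_insert_self _ _)
          simp only [blk, Finset.mem_Ico] at this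
          have he : d*(2*(i/2)+1) = d*(2*(i/2)) + d := by ring
          have he2 : d*(2*(i/2)+1) = d * i := by rw [← h]
          omega
    · refine ⟨(blk d i).erase (d*i), ?_, ?_, trivial⟩
      · rw [mem_filter]
        exact ⟨Gfam_subset_Fam hik (mem_Gfam.2 (Or.inl rfl)),
          Finset.mem_erase.2 ⟨hxi, hxblk⟩⟩
      · intro hmem
        rw [hS, Finset.mem_image] at hmem
        obtain ⟨F'', hF'', heq⟩ := hmem
        rw [mem_filter, mem_powerset] at hF''
        have hxm : x ∉ F'' := fun h => (Finset.notMem_erase x _) (hF''.1 h)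
        have hc1 : (insert x F'').card = F''.card + 1 := card_insert_of_notMem hxm
        have hc2 : ((blk d i).erase (d*i)).card = d - 1 := by
          rw [card_erase_of_mem (head_mem_blk d i (by omega)), blk_card]
        rw [heq, hc2] at hc1
        omega
  have : S.card + 1 ≤ ((Fam d k).filter (fun F => x ∈ F)).card := by
    have := Finset.card_insert_of_notMem hE2
    have hsub : insert E S ⊆ (Fam d k).filter (fun F => x ∈ F) :=
      insert_subset hE1 hSsub
    have := card_le_card hsub
    omega
  omega

/-- Construction 5.1: for `d ≥ 5`, `k ≥ 1` and `n = 2dk` there is a hereditary family `𝓕`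
on an `n`-set `V` with `|𝓕| = k(2^{d+1} − 2d − 1) + 1` such that every `x ∈ V` satisfies
`|𝓕_x| < |𝓕| − (2^{d−1} − d)`. -/
theorem nonlocal_construction (d k n : ℕ) (hd : 5 ≤ d) (hk : 1 ≤ k) (hn : n = 2 * d * k) :
    ∃ V : Finset ℕ, V.card = n ∧
      ∃ 𝓕 : Finset (Finset ℕ), 𝓕 ⊆ V.powerset ∧ Hereditary 𝓕 ∧
        𝓕.card = k * (2 ^ (d + 1) - 2 * d - 1) + 1 ∧
        ∀ x ∈ V, ((traceAt 𝓕 x).card : ℤ) < (𝓕.card : ℤ) - ((2 : ℤ) ^ (d - 1) - d) := by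
  subst hn
  refine ⟨Finset.range (2*d*k), Finset.card_range _, Fam d k,
    Fam_subset_powerset hd, Fam_hereditary hd, Fam_card hd, ?_⟩
  intro x hx
  rw [Finset.mem_range] at hx
  have htr : traceAt (Fam d k) x = (Fam d k).filter (fun F => x ∉ F) :=
    trace_eq _ _ (Fam_hereditary hd)
  have hsum := Finset.card_filter_add_card_filter_not
    (s := Fam d k) (p := fun F => x ∈ F)
  have hdeg := deg_lower (k := k) hd hx
  have hP : d + 1 ≤ 2^(d-1) := by
    have := two_pow_big (show 2 ≤ d-1 by omega); omega
  have key : (traceAt (Fam d k) x).card + 2^(d-1) + 1 ≤ (Fam d k).card + d := by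
    rw [htr]; omega
  have hc : ((2:ℤ)^(d-1)) = ((2^(d-1) : ℕ) : ℤ) := by push_cast; ring
  rw [hc]
  omega
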